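/- arXiv:1902.02280 — 2 statements merged into one kernel-verified Lean document; each statement's English description precedes it below -/
import Mathlib

section
/- Let (V, ω) be a symplectic vector space of dimension d = 2s, let K ⊆ V be a coisotropic subspace of codimension k, and let D ⊆ V be an isotropic subspace with D ∩ K = {0} and dim D = r < k. Then there exists an isotropic subspace D' ⊆ V with D ⊆ D', dim D' = r + 1, and D' ∩ K = {0}. -/
/-- Inductive step: an isotropic `D` transverse to a coisotropic `K` of codimension `k`,
with `dim D = r < k`, extends to an isotropic `D'` of dimension `r+1` still
transverse to `K`. -/
theorem isotropic_extension_step {V : Type*} [AddCommGroup V] [Module ℝ V]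
    [FiniteDimensional ℝ V] (ω : LinearMap.BilinForm ℝ V)
    (halt : ω.IsAlt) (hnd : ω.Nondegenerate)
    (s : ℕ) (hdim : Module.finrank ℝ V = 2 * s)
    (K : Submodule ℝ V) (hK : ω.orthogonal K ≤ K)
    (k : ℕ) (hk : Module.finrank ℝ V - Module.finrank ℝ K = k)
    (D : Submodule ℝ V) (hD : D ≤ ω.orthogonal D) (hDK : D ⊓ K = ⊥)
    (r : ℕ) (hr : Module.finrank ℝ D = r) (hrk : r < k) :
    ∃ D' : Submodule ℝ V, D ≤ D' ∧ D' ≤ ω.orthogonal D' ∧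
      Module.finrank ℝ D' = r + 1 ∧ D' ⊓ K = ⊥ := by
  have hrefl : ω.IsRefl := halt.isRefl
  have hKdim : Module.finrank ℝ K ≤ Module.finrank ℝ V := Submodule.finrank_le K
  have hrdim : Module.finrank ℝ D ≤ Module.finrank ℝ V := Submodule.finrank_le D
  have hOD : Module.finrank ℝ (ω.orthogonal D) = Module.finrank ℝ V - r := by
    rw [LinearMap.BilinForm.finrank_orthogonal hnd, hr]
  have hOK : Module.finrank ℝ (ω.orthogonal K) =
      Module.finrank ℝ V - Module.finrank ℝ K := by
    rw [LinearMap.BilinForm.finrank_orthogonal hnd]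
  -- find v ∈ D^⊥ with v ∉ D ⊔ K
  have hex : ∃ v, v ∈ ω.orthogonal D ∧ v ∉ D ⊔ K := by
    by_contra h
    push_neg at h
    have hsub : ω.orthogonal D ≤ D ⊔ K := fun x hx => h x hx
    -- then D^⊥ ⊓ K^⊥ ≤ (D ⊔ K)^⊥^... directly: D^⊥ ⊓ K^⊥ ≤ orthogonal (D ⊔ K)
    have h1 : ω.orthogonal D ⊓ ω.orthogonal K ≤ ω.orthogonal (D ⊔ K) := by
      rintro x ⟨hx1, hx2⟩ n hn
      obtain ⟨d, hd, k', hk', rfl⟩ := Submodule.mem_sup.mp hn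
      have e1 : ω d x = 0 := hx1 d hd
      have e2 : ω k' x = 0 := hx2 k' hk'
      simp [LinearMap.BilinForm.IsOrtho, e1, e2]
    have h2 : ω.orthogonal (D ⊔ K) ≤ ω.orthogonal (ω.orthogonal D) :=
      LinearMap.BilinForm.orthogonal_le hsub
    rw [LinearMap.BilinForm.orthogonal_orthogonal hnd hrefl] at h2
    have h3 : ω.orthogonal D ⊓ ω.orthogonal K ≤ D ⊓ K :=
      le_inf (le_trans h1 h2) (le_trans inf_le_right hK)
    have h4 : ω.orthogonal D ⊓ ω.orthogonal K = ⊥ :=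
      le_bot_iff.mp (hDK ▸ h3)
    have h5 := Submodule.finrank_sup_add_finrank_inf_eq (ω.orthogonal D) (ω.orthogonal K)
    rw [h4, finrank_bot, hOD, hOK] at h5
    have h6 : Module.finrank ℝ ↥(ω.orthogonal D ⊔ ω.orthogonal K) ≤ Module.finrank ℝ V :=
      Submodule.finrank_le _
    omega
  obtain ⟨v, hvD, hvDK⟩ := hex
  have hvne : v ≠ 0 := by rintro rfl; exact hvDK (Submodule.zero_mem _)
  have hvnD : v ∉ D := fun h => hvDK (Submodule.mem_sup_left h)
  refine ⟨D ⊔ Submodule.span ℝ {v}, le_sup_left, ?_, ?_, ?_⟩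
  · -- isotropy
    have key : ∀ x ∈ D ⊔ Submodule.span ℝ {v}, ∀ y ∈ D ⊔ Submodule.span ℝ {v},
        ω x y = 0 := by
      intro x hx y hy
      obtain ⟨d, hd, y1, hy1, rfl⟩ := Submodule.mem_sup.mp hx
      obtain ⟨d', hd', y2, hy2, rfl⟩ := Submodule.mem_sup.mp hy
      obtain ⟨c, rfl⟩ := Submodule.mem_span_singleton.mp hy1
      obtain ⟨c', rfl⟩ := Submodule.mem_span_singleton.mp hy2
      have e1 : ω d d' = 0 := hD hd' d hd
      have e2 : ω d v = 0 := hvD d hd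
      have e3 : ω v d' = 0 := hrefl d' v (hvD d' hd')
      have e4 : ω v v = 0 := halt v
      simp [map_add, map_smul, e1, e2, e3, e4]
    exact fun x hx n hn => key n hn x hx
  · -- dimension
    have hdisj : D ⊓ Submodule.span ℝ {v} = ⊥ :=
      disjoint_iff.mp ((Submodule.disjoint_span_singleton' hvne).mpr hvnD)
    have h5 := Submodule.finrank_sup_add_finrank_inf_eq D (Submodule.span ℝ {v})
    rw [hdisj, finrank_bot, hr, finrank_span_singleton hvne] at h5
    omega
  · -- transversality
    rw [eq_bot_iff]
    rintro x ⟨hx1, hx2⟩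
    obtain ⟨d, hd, y, hy, rfl⟩ := Submodule.mem_sup.mp hx1
    obtain ⟨c, rfl⟩ := Submodule.mem_span_singleton.mp hy
    rcases eq_or_ne c 0 with rfl | hc
    · rw [zero_smul, add_zero] at hx2 ⊢
      have : d ∈ D ⊓ K := ⟨hd, hx2⟩
      rw [hDK] at this
      exact this
    · exfalso
      apply hvDK
      have : v = c⁻¹ • ((d + c • v) - d) := by
        rw [add_sub_cancel_left, smul_smul, inv_mul_cancel₀ hc, one_smul]
      rw [this]
      exact Submodule.smul_mem _ _ (Submodule.sub_mem _
        (Submodule.mem_sup_right hx2) (Submodule.mem_sup_left hd))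
end

section
/- Let (V, ω) be a symplectic vector space of dimension d = 2s, let K ⊆ V be a coisotropic subspace of codimension k, and let x ∈ V be a vector with x ∉ K. Then there exists an isotropic subspace D ⊆ V with x ∈ D, dim D = k, and V = K ⊕ D. -/
open Module Submodule

private theorem aux_step {V : Type*} [AddCommGroup V] [Module ℝ V]
    [FiniteDimensional ℝ V] (ω : LinearMap.BilinForm ℝ V)
    (halt : ω.IsAlt) (hnd : ω.Nondegenerate)
    (K : Submodule ℝ V) (hK : ω.orthogonal K ≤ K) :
    ∀ n : ℕ, ∀ I : Submodule ℝ V, I ≤ ω.orthogonal I → K ⊓ I = ⊥ →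
      Module.finrank ℝ I + n = Module.finrank ℝ V - Module.finrank ℝ K →
      ∃ D : Submodule ℝ V, I ≤ D ∧ D ≤ ω.orthogonal D ∧
        Module.finrank ℝ D = Module.finrank ℝ V - Module.finrank ℝ K ∧
        K ⊓ D = ⊥ ∧ K ⊔ D = ⊤ := by
  have hrefl : ω.IsRefl := halt.isRefl
  intro n
  induction n with
  | zero =>
    intro I hiso hinf hdim
    refine ⟨I, le_rfl, hiso, by omega, hinf, ?_⟩
    have hKV : Module.finrank ℝ K ≤ Module.finrank ℝ V := K.finrank_le
    apply Submodule.eq_top_of_finrank_eq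
    have h1 := Submodule.finrank_sup_add_finrank_inf_eq K I
    rw [hinf, finrank_bot] at h1
    omega
  | succ n ih =>
    intro I hiso hinf hdim
    -- find y ∈ ω.orthogonal I with y ∉ K ⊔ I
    have hnle : ¬ (ω.orthogonal I ≤ K ⊔ I) := by
      intro h
      have h1 : ω.orthogonal (K ⊔ I) ≤ I := by
        have := LinearMap.BilinForm.orthogonal_le (B := ω) h
        rwa [ω.orthogonal_orthogonal hnd hrefl] at this
      have h2 : ω.orthogonal (K ⊔ I) ≤ K :=
        le_trans (LinearMap.BilinForm.orthogonal_le le_sup_left) hK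
      have h3 : ω.orthogonal (K ⊔ I) = ⊥ := by
        rw [eq_bot_iff]; exact (le_inf h2 h1).trans hinf.le
      have h4 := ω.finrank_orthogonal hnd (K ⊔ I)
      rw [h3, finrank_bot] at h4
      have h5 : Module.finrank ℝ (K ⊔ I : Submodule ℝ V) ≤ Module.finrank ℝ V :=
        Submodule.finrank_le _
      have h6 : (K ⊔ I : Submodule ℝ V) = ⊤ := Submodule.eq_top_of_finrank_eq (by omega)
      have h7 := Submodule.finrank_sup_add_finrank_inf_eq K I
      rw [h6, hinf, finrank_bot, finrank_top] at h7
      have hKV : Module.finrank ℝ K ≤ Module.finrank ℝ V := K.finrank_le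
      omega
    obtain ⟨y, hyO, hyKI⟩ := SetLike.not_le_iff_exists.1 hnle
    have hy0 : y ≠ 0 := fun h => hyKI (by rw [h]; exact (K ⊔ I).zero_mem)
    have hyI : y ∉ I := fun h => hyKI ((le_sup_right : I ≤ K ⊔ I) h)
    set I' := I ⊔ (ℝ ∙ y) with hI'
    -- isotropy of I'
    have horth : ∀ a ∈ I', ∀ b ∈ I', ω a b = 0 := by
      intro a ha b hb
      obtain ⟨a₁, ha₁, a₂, ha₂, rfl⟩ := Submodule.mem_sup.1 ha
      obtain ⟨b₁, hb₁, b₂, hb₂, rfl⟩ := Submodule.mem_sup.1 hb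
      obtain ⟨t, rfl⟩ := Submodule.mem_span_singleton.1 ha₂
      obtain ⟨u, rfl⟩ := Submodule.mem_span_singleton.1 hb₂
      have h11 : ω a₁ b₁ = 0 := hrefl _ _ (hiso ha₁ b₁ hb₁)
      have h1y : ω a₁ y = 0 := hyO a₁ ha₁
      have hy1 : ω y b₁ = 0 := hrefl _ _ (hyO b₁ hb₁)
      have hyy : ω y y = 0 := halt y
      simp [map_add, map_smul, h11, h1y, hy1, hyy]
    have hiso' : I' ≤ ω.orthogonal I' := fun v hv =>
      (LinearMap.BilinForm.mem_orthogonal_iff).2 fun nn hn => horth nn hn v hv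
    -- K ⊓ I' = ⊥
    have hinf' : K ⊓ I' = ⊥ := by
      rw [eq_bot_iff]
      rintro v ⟨hvK, hvI'⟩
      obtain ⟨i, hi, z, hz, rfl⟩ := Submodule.mem_sup.1 hvI'
      obtain ⟨t, rfl⟩ := Submodule.mem_span_singleton.1 hz
      rcases eq_or_ne t 0 with rfl | ht
      · rw [zero_smul, add_zero] at hvK ⊢
        have : i ∈ K ⊓ I := ⟨hvK, hi⟩
        rwa [hinf] at this
      · exfalso
        apply hyKI
        have : t • y = (i + t • y) - i := by abel
        have hmem : t • y ∈ K ⊔ I :=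
          this ▸ Submodule.sub_mem _ (Submodule.mem_sup_left hvK) (Submodule.mem_sup_right hi)
        have := Submodule.smul_mem _ t⁻¹ hmem
        rwa [smul_smul, inv_mul_cancel₀ ht, one_smul] at this
    -- finrank I' = finrank I + 1
    have hIy : I ⊓ (ℝ ∙ y) = ⊥ := by
      rw [eq_bot_iff]
      rintro v ⟨hvI, hvy⟩
      obtain ⟨t, rfl⟩ := Submodule.mem_span_singleton.1 hvy
      rcases eq_or_ne t 0 with rfl | ht
      · simp
      · exfalso
        apply hyI
        have := Submodule.smul_mem _ t⁻¹ hvI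
        rwa [smul_smul, inv_mul_cancel₀ ht, one_smul] at this
    have hdim' : Module.finrank ℝ I' = Module.finrank ℝ I + 1 := by
      have h1 := Submodule.finrank_sup_add_finrank_inf_eq I (ℝ ∙ y)
      rw [hIy, finrank_bot, finrank_span_singleton hy0] at h1
      rw [hI']
      omega
    obtain ⟨D, hID, hDiso, hDdim, hDinf, hDsup⟩ := ih I' hiso' hinf' (by omega)
    exact ⟨D, le_trans (le_sup_left.trans le_rfl) hID, hDiso, hDdim, hDinf, hDsup⟩

/-- Linear core of the main theorem: given a coisotropic `K` of codimension `k`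
and `x ∉ K`, there is an isotropic complement `D` of `K` of dimension `k`
containing `x`. -/
theorem exists_isotropic_complement {V : Type*} [AddCommGroup V] [Module ℝ V]
    [FiniteDimensional ℝ V] (ω : LinearMap.BilinForm ℝ V)
    (halt : ω.IsAlt) (hnd : ω.Nondegenerate)
    (s : ℕ) (hdim : Module.finrank ℝ V = 2 * s)
    (K : Submodule ℝ V) (hK : ω.orthogonal K ≤ K)
    (k : ℕ) (hk : Module.finrank ℝ V - Module.finrank ℝ K = k)
    (x : V) (hx : x ∉ K) :
    ∃ D : Submodule ℝ V, x ∈ D ∧ D ≤ ω.orthogonal D ∧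
      Module.finrank ℝ D = k ∧ K ⊓ D = ⊥ ∧ K ⊔ D = ⊤ := by
  have hx0 : x ≠ 0 := fun h => hx (h ▸ K.zero_mem)
  have hKlt : Module.finrank ℝ K < Module.finrank ℝ V :=
    Submodule.finrank_lt (fun h => hx (h ▸ Submodule.mem_top))
  set I : Submodule ℝ V := ℝ ∙ x with hI
  have hiso : I ≤ ω.orthogonal I := by
    intro v hv
    rw [LinearMap.BilinForm.mem_orthogonal_iff]
    intro n hn
    obtain ⟨t, rfl⟩ := Submodule.mem_span_singleton.1 hv
    obtain ⟨u, rfl⟩ := Submodule.mem_span_singleton.1 hn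
    have : ω x x = 0 := halt x
    simp [LinearMap.BilinForm.IsOrtho, this]
  have hinf : K ⊓ I = ⊥ := by
    rw [eq_bot_iff]
    rintro v ⟨hvK, hvI⟩
    obtain ⟨t, rfl⟩ := Submodule.mem_span_singleton.1 hvI
    rcases eq_or_ne t 0 with rfl | ht
    · simp
    · exfalso
      apply hx
      have := Submodule.smul_mem _ t⁻¹ hvK
      rwa [smul_smul, inv_mul_cancel₀ ht, one_smul] at this
  have hIdim : Module.finrank ℝ I = 1 := finrank_span_singleton hx0
  obtain ⟨D, hID, hDiso, hDdim, hDinf, hDsup⟩ :=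
    aux_step ω halt hnd K hK (k - 1) I hiso hinf (by omega)
  exact ⟨D, hID (Submodule.mem_span_singleton_self x), hDiso, by omega, hDinf, hDsup⟩
end
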